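/- With ζ = n³, the optimal k-median cost of the lower-bound instance equals (k−1)(n/k − 1); it is attained by the set U ∪ {y} for any y ∈ Y, every other subset R ⊆ V with |R| = k has COST_{n³}(R) ≥ (k−1)(n/k − 1), and in particular opt_{n³}(k) ≤ n. -/

import Mathlib

/-- The lower-bound vertex set: `U` has `k-1` vertices, `Y` has `n'` vertices,
and the groups `X_2, …, X_k` are `k-1` groups of `n'-1` vertices each. -/
abbrev LBV (k n' : ℕ) : Type := Fin (k - 1) ⊕ (Fin n' ⊕ (Fin (k - 1) × Fin (n' - 1)))

/-- The distance function `d_ζ` on the lower-bound vertex set. -/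
noncomputable def dLB (k n' : ℕ) (ζ : ℝ) (a b : LBV k n') : ℝ :=
  if a = b then 0
  else
    match a, b with
    | Sum.inl _, _ => ζ
    | _, Sum.inl _ => ζ
    | Sum.inr (Sum.inl _), Sum.inr (Sum.inl _) => 0
    | Sum.inr (Sum.inr p), Sum.inr (Sum.inr q) => if p.1 = q.1 then 0 else 1
    | Sum.inr (Sum.inl _), Sum.inr (Sum.inr _) => 1
    | Sum.inr (Sum.inr _), Sum.inr (Sum.inl _) => 1

/-- The `k`-median cost of a set of centers `R`:
`COST_ζ(R) = Σ_{v ∈ V} min_{r ∈ R} d_ζ(v, r)`. -/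
noncomputable def costLB (k n' : ℕ) (ζ : ℝ) (R : Finset (LBV k n')) : ℝ :=
  ∑ v : LBV k n', sInf ((fun r => dLB k n' ζ v r) '' ↑R)

/-- `opt_ζ(kk) = min { COST_ζ(R) : R ⊆ V, |R| = kk }`. -/
noncomputable def optLB (k n' : ℕ) (ζ : ℝ) (kk : ℕ) : ℝ :=
  sInf {c : ℝ | ∃ R : Finset (LBV k n'), R.card = kk ∧ c = costLB k n' ζ R}

variable {k n' : ℕ} {ζ : ℝ}

lemma dLB_self (a : LBV k n') : dLB k n' ζ a a = 0 := by simp [dLB]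

lemma dLB_inl_left {i : Fin (k-1)} {b : LBV k n'} (h : (Sum.inl i : LBV k n') ≠ b) :
    dLB k n' ζ (Sum.inl i) b = ζ := by
  unfold dLB; rw [if_neg h]

lemma dLB_Y_inl (j : Fin n') (i : Fin (k-1)) :
    dLB k n' ζ (Sum.inr (Sum.inl j)) (Sum.inl i) = ζ := by
  unfold dLB; rw [if_neg (by simp)]

lemma dLB_X_inl (p : Fin (k-1) × Fin (n'-1)) (i : Fin (k-1)) :
    dLB k n' ζ (Sum.inr (Sum.inr p)) (Sum.inl i) = ζ := by
  unfold dLB; rw [if_neg (by simp)]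

lemma dLB_Y_Y (j j' : Fin n') :
    dLB k n' ζ (Sum.inr (Sum.inl j)) (Sum.inr (Sum.inl j')) = 0 := by
  unfold dLB; split_ifs <;> rfl

lemma dLB_X_Y (p : Fin (k-1) × Fin (n'-1)) (j : Fin n') :
    dLB k n' ζ (Sum.inr (Sum.inr p)) (Sum.inr (Sum.inl j)) = 1 := by
  unfold dLB; rw [if_neg (by simp)]

lemma dLB_Y_X (j : Fin n') (p : Fin (k-1) × Fin (n'-1)) :
    dLB k n' ζ (Sum.inr (Sum.inl j)) (Sum.inr (Sum.inr p)) = 1 := by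
  unfold dLB; rw [if_neg (by simp)]

lemma dLB_X_X {p q : Fin (k-1) × Fin (n'-1)} (h : p.1 ≠ q.1) :
    dLB k n' ζ (Sum.inr (Sum.inr p)) (Sum.inr (Sum.inr q)) = 1 := by
  unfold dLB
  rw [if_neg (by simp; rintro rfl; exact h rfl)]
  simp [h]

lemma dLB_nonneg (hζ : 0 ≤ ζ) (a b : LBV k n') : 0 ≤ dLB k n' ζ a b := by
  rcases a with i | j | p <;> rcases b with i' | j' | p' <;> unfold dLB <;>
    split_ifs <;> first | exact le_refl 0 | exact hζ | exact zero_le_one | (by_cases hpq : p.1 = p'.1 <;> simp [hpq])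

noncomputable def termLB (k n' : ℕ) (ζ : ℝ) (R : Finset (LBV k n')) (v : LBV k n') : ℝ :=
  sInf ((fun r => dLB k n' ζ v r) '' ↑R)

lemma costLB_eq (R : Finset (LBV k n')) :
    costLB k n' ζ R = (∑ i : Fin (k-1), termLB k n' ζ R (Sum.inl i)) +
      ((∑ j : Fin n', termLB k n' ζ R (Sum.inr (Sum.inl j))) +
       (∑ p : Fin (k-1) × Fin (n'-1), termLB k n' ζ R (Sum.inr (Sum.inr p)))) := by
  unfold costLB termLB
  rw [Fintype.sum_sum_type, Fintype.sum_sum_type]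

lemma termLB_eq {R : Finset (LBV k n')} {v r : LBV k n'} (hr : r ∈ R)
    (hlb : ∀ s ∈ R, dLB k n' ζ v r ≤ dLB k n' ζ v s) :
    termLB k n' ζ R v = dLB k n' ζ v r := by
  refine le_antisymm (csInf_le ((R.finite_toSet.image _).bddBelow) ⟨r, hr, rfl⟩) ?_
  refine le_csInf ⟨_, r, hr, rfl⟩ ?_
  rintro x ⟨s, hs, rfl⟩
  exact hlb s hs

lemma le_termLB {R : Finset (LBV k n')} {v : LBV k n'} (hR : R.Nonempty) {c : ℝ}
    (h : ∀ s ∈ R, c ≤ dLB k n' ζ v s) : c ≤ termLB k n' ζ R v := by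
  obtain ⟨r, hr⟩ := hR
  refine le_csInf ⟨_, r, hr, rfl⟩ ?_
  rintro x ⟨s, hs, rfl⟩
  exact h s hs

lemma termLB_nonneg (hζ : 0 ≤ ζ) (R : Finset (LBV k n')) (v : LBV k n') :
    0 ≤ termLB k n' ζ R v := by
  rcases R.eq_empty_or_nonempty with rfl | hR
  · simp [termLB, Real.sInf_empty]
  · exact le_termLB hR (fun s _ => dLB_nonneg hζ v s)

/-- With `ζ = n³`, the optimal `k`-median cost of the lower-bound instance
equals `(k−1)(n/k − 1)`: it is attained by the set `U ∪ {y}` for any `y ∈ Y`,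
every subset `R ⊆ V` with `|R| = k` has `COST_{n³}(R) ≥ (k−1)(n/k − 1)`, and
in particular `opt_{n³}(k) ≤ n`. -/
theorem stmt1 (n k : ℕ) (hk : 2 ≤ k) (hdvd : k ∣ n) (hnk : 3 ≤ n / k) :
    (∀ j : Fin (n / k),
      costLB k (n / k) ((n : ℝ) ^ 3)
          (insert (Sum.inr (Sum.inl j))
            (Finset.univ.image (Sum.inl : Fin (k - 1) → LBV k (n / k))))
        = ((k : ℝ) - 1) * (((n / k : ℕ) : ℝ) - 1)) ∧
    (∀ R : Finset (LBV k (n / k)), R.card = k →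
      ((k : ℝ) - 1) * (((n / k : ℕ) : ℝ) - 1) ≤ costLB k (n / k) ((n : ℝ) ^ 3) R) ∧
    optLB k (n / k) ((n : ℝ) ^ 3) k = ((k : ℝ) - 1) * (((n / k : ℕ) : ℝ) - 1) ∧
    optLB k (n / k) ((n : ℝ) ^ 3) k ≤ (n : ℝ) := by
  have hk1 : 1 ≤ k := by omega
  have hneq : n = k * (n / k) := (Nat.mul_div_cancel' hdvd).symm
  have hn6 : 6 ≤ n := by
    calc 6 = 2 * 3 := rfl
    _ ≤ k * (n / k) := Nat.mul_le_mul hk hnk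
    _ = n := hneq.symm
  have hn'1 : 1 ≤ n / k := by omega
  set ζ : ℝ := (n : ℝ) ^ 3 with hζdef
  have hnR : (6 : ℝ) ≤ (n : ℝ) := by exact_mod_cast hn6
  have hζn : (n : ℝ) ≤ ζ := by
    rw [hζdef]
    exact le_self_pow₀ (by linarith) (by norm_num)
  have hζ1 : (1 : ℝ) ≤ ζ := by linarith
  have hζ0 : (0 : ℝ) ≤ ζ := by linarith
  have hcast : ((k : ℝ) - 1) = ((k - 1 : ℕ) : ℝ) := by
    rw [Nat.cast_sub hk1]; norm_num
  have hcast' : (((n / k : ℕ)) : ℝ) - 1 = ((n / k - 1 : ℕ) : ℝ) := by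
    rw [Nat.cast_sub hn'1]; norm_num
  have hkeyn : ((k : ℝ) - 1) * (((n / k : ℕ) : ℝ) - 1) ≤ (n : ℝ) := by
    have h1 : (n : ℝ) = (k : ℝ) * ((n / k : ℕ) : ℝ) := by exact_mod_cast hneq
    have h2 : (2 : ℝ) ≤ (k : ℝ) := by exact_mod_cast hk
    have h3 : (3 : ℝ) ≤ ((n / k : ℕ) : ℝ) := by exact_mod_cast hnk
    nlinarith
  have hynotimg : ∀ j : Fin (n / k), (Sum.inr (Sum.inl j) : LBV k (n / k)) ∉
      Finset.univ.image (Sum.inl : Fin (k - 1) → LBV k (n / k)) := by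
    intro j h
    obtain ⟨i, _, h⟩ := Finset.mem_image.mp h
    exact absurd h (by simp)
  have hcardR0 : ∀ j : Fin (n / k),
      (insert (Sum.inr (Sum.inl j))
        (Finset.univ.image (Sum.inl : Fin (k - 1) → LBV k (n / k)))).card = k := by
    intro j
    rw [Finset.card_insert_of_notMem (hynotimg j),
      Finset.card_image_of_injective _ Sum.inl_injective, Finset.card_univ, Fintype.card_fin]
    omega
  have part1 : ∀ j : Fin (n / k),
      costLB k (n / k) ζ (insert (Sum.inr (Sum.inl j))
        (Finset.univ.image (Sum.inl : Fin (k - 1) → LBV k (n / k))))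
        = ((k : ℝ) - 1) * (((n / k : ℕ) : ℝ) - 1) := by
    intro j
    set R0 : Finset (LBV k (n / k)) := insert (Sum.inr (Sum.inl j))
      (Finset.univ.image (Sum.inl : Fin (k - 1) → LBV k (n / k))) with hR0
    rw [costLB_eq]
    have hA : ∀ i : Fin (k - 1), termLB k (n / k) ζ R0 (Sum.inl i) = 0 := by
      intro i
      have h := termLB_eq (k := k) (n' := n / k) (ζ := ζ) (R := R0) (v := Sum.inl i)
        (r := Sum.inl i)
        (Finset.mem_insert_of_mem (Finset.mem_image_of_mem _ (Finset.mem_univ i)))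
        (fun s hs => by rw [dLB_self]; exact dLB_nonneg hζ0 _ s)
      rw [h, dLB_self]
    have hB : ∀ j' : Fin (n / k), termLB k (n / k) ζ R0 (Sum.inr (Sum.inl j')) = 0 := by
      intro j'
      have h := termLB_eq (k := k) (n' := n / k) (ζ := ζ) (R := R0)
        (v := Sum.inr (Sum.inl j')) (r := Sum.inr (Sum.inl j))
        (Finset.mem_insert_self _ _)
        (fun s hs => by rw [dLB_Y_Y]; exact dLB_nonneg hζ0 _ s)
      rw [h, dLB_Y_Y]
    have hC : ∀ p : Fin (k - 1) × Fin (n / k - 1),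
        termLB k (n / k) ζ R0 (Sum.inr (Sum.inr p)) = 1 := by
      intro p
      have h := termLB_eq (k := k) (n' := n / k) (ζ := ζ) (R := R0)
        (v := Sum.inr (Sum.inr p)) (r := Sum.inr (Sum.inl j))
        (Finset.mem_insert_self _ _)
        (fun s hs => by
          rw [dLB_X_Y]
          rcases Finset.mem_insert.mp hs with rfl | hs
          · rw [dLB_X_Y]
          · obtain ⟨i, _, rfl⟩ := Finset.mem_image.mp hs
            rw [dLB_X_inl]; exact hζ1)
      rw [h, dLB_X_Y]
    simp only [hA, hB, hC, Finset.sum_const_zero, Finset.sum_const, Finset.card_univ,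
      Fintype.card_prod, Fintype.card_fin, nsmul_eq_mul, mul_one, zero_add]
    rw [hcast, hcast']
    push_cast
    ring
  have part2 : ∀ R : Finset (LBV k (n / k)), R.card = k →
      ((k : ℝ) - 1) * (((n / k : ℕ) : ℝ) - 1) ≤ costLB k (n / k) ζ R := by
    intro R hR
    have hRne : R.Nonempty := Finset.card_pos.mp (by omega)
    by_cases hU : ∀ i : Fin (k - 1), (Sum.inl i : LBV k (n / k)) ∈ R
    · -- U ⊆ R
      have himg : Finset.univ.image (Sum.inl : Fin (k - 1) → LBV k (n / k)) ⊆ R := by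
        intro x hx
        obtain ⟨i, _, rfl⟩ := Finset.mem_image.mp hx
        exact hU i
      have hci : (Finset.univ.image (Sum.inl : Fin (k - 1) → LBV k (n / k))).card = k - 1 := by
        rw [Finset.card_image_of_injective _ Sum.inl_injective, Finset.card_univ,
          Fintype.card_fin]
      have hd : (R \ Finset.univ.image (Sum.inl : Fin (k - 1) → LBV k (n / k))).card = 1 := by
        rw [Finset.card_sdiff_of_subset himg, hR, hci]; omega
      obtain ⟨w, hw⟩ := Finset.card_eq_one.mp hd
      have hwmem : w ∈ R \ Finset.univ.image (Sum.inl : Fin (k - 1) → LBV k (n / k)) :=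
        hw ▸ Finset.mem_singleton_self w
      have hwR : w ∈ R := (Finset.mem_sdiff.mp hwmem).1
      have hwni : w ∉ Finset.univ.image (Sum.inl : Fin (k - 1) → LBV k (n / k)) :=
        (Finset.mem_sdiff.mp hwmem).2
      have hmem : ∀ r ∈ R, r = w ∨ ∃ i : Fin (k - 1), r = Sum.inl i := by
        intro r hr
        by_cases h : r ∈ Finset.univ.image (Sum.inl : Fin (k - 1) → LBV k (n / k))
        · obtain ⟨i, _, rfl⟩ := Finset.mem_image.mp h
          exact Or.inr ⟨i, rfl⟩
        · exact Or.inl (Finset.mem_singleton.mp (hw ▸ Finset.mem_sdiff.mpr ⟨hr, h⟩))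
      rw [costLB_eq]
      have hA : 0 ≤ ∑ i : Fin (k - 1), termLB k (n / k) ζ R (Sum.inl i) :=
        Finset.sum_nonneg fun i _ => termLB_nonneg hζ0 _ _
      rcases w with i | j | q
      · exact absurd (Finset.mem_image_of_mem _ (Finset.mem_univ i)) hwni
      · -- extra center in Y
        have hB : 0 ≤ ∑ j' : Fin (n / k), termLB k (n / k) ζ R (Sum.inr (Sum.inl j')) :=
          Finset.sum_nonneg fun j' _ => termLB_nonneg hζ0 _ _
        have hC : ∀ p : Fin (k - 1) × Fin (n / k - 1),
            (1 : ℝ) ≤ termLB k (n / k) ζ R (Sum.inr (Sum.inr p)) := by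
          intro p
          refine le_termLB hRne (fun s hs => ?_)
          rcases hmem s hs with rfl | ⟨i, rfl⟩
          · rw [dLB_X_Y]
          · rw [dLB_X_inl]; exact hζ1
        have hCs : ((k - 1 : ℕ) : ℝ) * ((n / k - 1 : ℕ) : ℝ) ≤
            ∑ p : Fin (k - 1) × Fin (n / k - 1), termLB k (n / k) ζ R (Sum.inr (Sum.inr p)) := by
          calc ((k - 1 : ℕ) : ℝ) * ((n / k - 1 : ℕ) : ℝ)
              = ∑ _p : Fin (k - 1) × Fin (n / k - 1), (1 : ℝ) := by
                simp [Finset.card_univ]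
            _ ≤ _ := Finset.sum_le_sum fun p _ => hC p
        rw [hcast, hcast']
        linarith
      · -- extra center in some X group
        have hB : ∀ j' : Fin (n / k),
            (1 : ℝ) ≤ termLB k (n / k) ζ R (Sum.inr (Sum.inl j')) := by
          intro j'
          refine le_termLB hRne (fun s hs => ?_)
          rcases hmem s hs with rfl | ⟨i, rfl⟩
          · rw [dLB_Y_X]
          · rw [dLB_Y_inl]; exact hζ1
        have hC : ∀ p : Fin (k - 1) × Fin (n / k - 1), p.1 ≠ q.1 →
            (1 : ℝ) ≤ termLB k (n / k) ζ R (Sum.inr (Sum.inr p)) := by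
          intro p hp
          refine le_termLB hRne (fun s hs => ?_)
          rcases hmem s hs with rfl | ⟨i, rfl⟩
          · rw [dLB_X_X hp]
          · rw [dLB_X_inl]; exact hζ1
        have hBs : ((n / k : ℕ) : ℝ) ≤
            ∑ j' : Fin (n / k), termLB k (n / k) ζ R (Sum.inr (Sum.inl j')) := by
          calc ((n / k : ℕ) : ℝ) = ∑ _j' : Fin (n / k), (1 : ℝ) := by simp
            _ ≤ _ := Finset.sum_le_sum fun j' _ => hB j'
        have hCs : ((k - 1 : ℕ) : ℝ) * ((n / k - 1 : ℕ) : ℝ) - ((n / k - 1 : ℕ) : ℝ) ≤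
            ∑ p : Fin (k - 1) × Fin (n / k - 1), termLB k (n / k) ζ R (Sum.inr (Sum.inr p)) := by
          have hstep : ∑ p : Fin (k - 1) × Fin (n / k - 1),
              (if p.1 = q.1 then (0 : ℝ) else 1) ≤
              ∑ p : Fin (k - 1) × Fin (n / k - 1), termLB k (n / k) ζ R (Sum.inr (Sum.inr p)) := by
            refine Finset.sum_le_sum fun p _ => ?_
            by_cases h : p.1 = q.1
            · rw [if_pos h]; exact termLB_nonneg hζ0 _ _
            · rw [if_neg h]; exact hC p h
          refine le_trans (le_of_eq ?_) hstep
          rw [Fintype.sum_prod_type]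
          have hinner : ∀ i : Fin (k - 1),
              (∑ _j2 : Fin (n / k - 1), if i = q.1 then (0 : ℝ) else 1) =
              ((n / k - 1 : ℕ) : ℝ) - (if i = q.1 then ((n / k - 1 : ℕ) : ℝ) else 0) := by
            intro i
            by_cases h : i = q.1 <;> simp [h]
          simp only [hinner]
          rw [Finset.sum_sub_distrib, Finset.sum_const, Finset.sum_ite_eq' Finset.univ q.1
            (fun _ => ((n / k - 1 : ℕ) : ℝ))]
          simp [Finset.card_univ]
        have hMN : ((n / k - 1 : ℕ) : ℝ) ≤ ((n / k : ℕ) : ℝ) := by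
          exact_mod_cast Nat.sub_le _ _
        rw [hcast, hcast']
        linarith
    · -- some u ∈ U is not a center
      push_neg at hU
      obtain ⟨i, hi⟩ := hU
      have hterm : ζ ≤ termLB k (n / k) ζ R (Sum.inl i) := by
        refine le_termLB hRne (fun s hs => ?_)
        have hne : (Sum.inl i : LBV k (n / k)) ≠ s := fun h => hi (h ▸ hs)
        rw [dLB_inl_left hne]
      have hsum : termLB k (n / k) ζ R (Sum.inl i) ≤ costLB k (n / k) ζ R := by
        show termLB k (n / k) ζ R (Sum.inl i) ≤ ∑ v : LBV k (n / k), termLB k (n / k) ζ R v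
        exact Finset.single_le_sum (fun v _ => termLB_nonneg hζ0 R v) (Finset.mem_univ _)
      linarith
  have hmemS : ((k : ℝ) - 1) * (((n / k : ℕ) : ℝ) - 1) ∈
      {c : ℝ | ∃ R : Finset (LBV k (n / k)), R.card = k ∧ c = costLB k (n / k) ζ R} :=
    ⟨_, hcardR0 ⟨0, by omega⟩, (part1 ⟨0, by omega⟩).symm⟩
  have hopt : optLB k (n / k) ζ k = ((k : ℝ) - 1) * (((n / k : ℕ) : ℝ) - 1) := by
    refine le_antisymm (csInf_le ⟨((k : ℝ) - 1) * (((n / k : ℕ) : ℝ) - 1), ?_⟩ hmemS)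
      (le_csInf ⟨_, hmemS⟩ ?_)
    · rintro c ⟨R, hc, rfl⟩; exact part2 R hc
    · rintro c ⟨R, hc, rfl⟩; exact part2 R hc
  exact ⟨part1, part2, hopt, hopt ▸ hkeyn⟩
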